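/- There exist universal constants 0 < A₁ ≤ A₂, 0 < F₁ ≤ F₂, C ≥ 0 and c > 0 such that the following holds. Let a, b, m, n : ℤ → ℝ be a positive solution of the ABMN system on ℤ with battlefield index k ∈ ℤ. Then there exist A ∈ [A₁, A₂] and F ∈ [F₁, F₂] such that for every j ≥ k there exist reals ε₁, ε₂, ε₃, ε₄ with |ε_r| ≤ C·exp(−c·2^{j−k}) for r = 1,2,3,4 and: a_j = (m_k − m_{k−1})·2F·2^{2(j−k)}·exp(−2·2^{j−k}·A)·(1+ε₁); b_j = (m_k − m_{k−1})·4F·2^{2(j−k)}·exp(−3·2^{j−k}·A)·(1+ε₂); m_j − m_{j−1} = (m_k − m_{k−1})·F·2^{2(j−k)}·exp(−2^{j−k}·A)·(1+ε₃); n_{j−1} − n_j = (m_k − m_{k−1})·2F·2^{2(j−k)}·exp(−2^{j−k+1}·A)·(1+ε₄). -/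

import Mathlib

namespace ABMNdecay

noncomputable def dlt (u : ℤ → ℝ) (i : ℤ) : ℝ := Real.log ((1 + u i) * (1 + 4 * u (i + 1)))

noncomputable def S (u : ℤ → ℝ) (j : ℤ) : ℝ := ∑' i : ℕ, dlt u (j + (i : ℤ)) * (1 / 2) ^ (i + 1)

noncomputable def T (u : ℤ → ℝ) (j : ℤ) : ℝ :=
  ∑' i : ℕ, (S u (j + (i : ℤ)) + Real.log (1 + u (j + (i : ℤ))))

noncomputable def Aa (u : ℤ → ℝ) (k : ℤ) : ℝ := -Real.log (u k) + S u k

noncomputable def w (k j : ℤ) : ℝ := (1 / 2 : ℝ) ^ 2 ^ (j - k).toNat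

lemma w_pos (k j : ℤ) : 0 < w k j := by unfold w; positivity

lemma w_le_half (k j : ℤ) : w k j ≤ 1 / 2 := by
  have h1 : 1 ≤ 2 ^ (j - k).toNat := Nat.one_le_two_pow
  calc w k j ≤ (1 / 2 : ℝ) ^ 1 := pow_le_pow_of_le_one (by norm_num) (by norm_num) h1
  _ = 1 / 2 := pow_one _

lemma w_self (k : ℤ) : w k k = 1 / 2 := by simp [w]

lemma w_succ {k j : ℤ} (h : k ≤ j) : w k (j + 1) = w k j ^ 2 := by
  have h1 : (j + 1 - k).toNat = (j - k).toNat + 1 := by omega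
  rw [w, w, h1, pow_succ, pow_mul]

lemma nat_two_pow_add (N i : ℕ) : 2 ^ N + i ≤ 2 ^ (N + i) := by
  induction i with
  | zero => simp
  | succ n ih =>
      have h1 : 1 ≤ 2 ^ (N + n) := Nat.one_le_two_pow
      have h2 : 2 ^ (N + (n + 1)) = 2 ^ (N + n) * 2 := by rw [← pow_succ]; ring_nf
      omega

lemma w_add_le {k j : ℤ} (h : k ≤ j) (i : ℕ) : w k (j + (i : ℤ)) ≤ w k j * (1 / 2) ^ i := by
  have h1 : (j + (i : ℤ) - k).toNat = (j - k).toNat + i := by omega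
  rw [w, w, h1, ← pow_add]
  exact pow_le_pow_of_le_one (by norm_num) (by norm_num) (nat_two_pow_add _ _)

section core

variable {u : ℤ → ℝ} {k : ℤ}
variable (hpos : ∀ i, 0 < u i)
variable (hrec : ∀ i, u (i + 1) * ((1 + u i) * (1 + 4 * u (i + 1))) = u i ^ 2)
variable (hk2 : u k ≤ 1 / 2)

include hpos hrec in
lemma sq_step (i : ℤ) : u (i + 1) ≤ u i ^ 2 := by
  have h1 := hpos i
  have h2 := hpos (i + 1)
  nlinarith [hrec i, mul_pos h1 h2, mul_pos (mul_pos h1 h2) h2, mul_pos h2 h2]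

include hpos hrec hk2 in
lemma u_le_w : ∀ j, k ≤ j → u j ≤ w k j := by
  refine Int.le_induction ?_ ?_
  · rw [w_self]; exact hk2
  · intro j hj ih
    rw [w_succ hj]
    calc u (j + 1) ≤ u j ^ 2 := sq_step hpos hrec j
    _ ≤ w k j ^ 2 := by nlinarith [hpos j, w_pos k j]

include hpos hrec hk2 in
lemma u_le_half {j : ℤ} (h : k ≤ j) : u j ≤ 1 / 2 :=
  (u_le_w hpos hrec hk2 j h).trans (w_le_half k j)

include hpos in
lemma dlt_nonneg (i : ℤ) : 0 ≤ dlt u i := by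
  have h1 := hpos i
  have h2 := hpos (i + 1)
  exact Real.log_nonneg (by nlinarith)

include hpos hrec hk2 in
lemma dlt_le {j : ℤ} (h : k ≤ j) : dlt u j ≤ 4 * u j := by
  have h1 := hpos j
  have h2 := hpos (j + 1)
  have h3 := sq_step hpos hrec j
  have h4 := u_le_half hpos hrec hk2 h
  have h5 : (0:ℝ) < (1 + u j) * (1 + 4 * u (j + 1)) := by nlinarith
  have h6 := Real.log_le_sub_one_of_pos h5
  unfold dlt
  nlinarith

include hpos hrec hk2 in
lemma sumS {j : ℤ} (h : k ≤ j) :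
    Summable (fun i : ℕ => dlt u (j + (i : ℤ)) * (1 / 2) ^ (i + 1)) := by
  apply Summable.of_nonneg_of_le
    (g := fun i : ℕ => dlt u (j + (i : ℤ)) * (1 / 2) ^ (i + 1))
    (f := fun i : ℕ => (1 / 2 : ℝ) ^ i)
  · intro i
    have := dlt_nonneg hpos (j + (i : ℤ))
    positivity
  · intro i
    have hji : k ≤ j + (i : ℤ) := by omega
    have h1 := dlt_le hpos hrec hk2 hji
    have h2 := u_le_half hpos hrec hk2 hji
    have h3 := dlt_nonneg hpos (j + (i : ℤ))
    have h4 : (0:ℝ) < (1/2:ℝ) ^ (i+1) := by positivity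
    calc dlt u (j + (i : ℤ)) * (1 / 2) ^ (i + 1) ≤ 2 * (1 / 2 : ℝ) ^ (i + 1) := by nlinarith
    _ = (1 / 2 : ℝ) ^ i := by rw [pow_succ]; ring
  · exact summable_geometric_two

lemma S_nonneg (hpos : ∀ i, 0 < u i) (j : ℤ) : 0 ≤ S u j :=
  tsum_nonneg fun i => by have := dlt_nonneg hpos (j + (i : ℤ)); positivity

lemma tsum_half_pow_succ : ∑' i : ℕ, (1 / 2 : ℝ) ^ (i + 1) = 1 := by
  simp only [pow_succ]
  rw [tsum_mul_right, tsum_geometric_two]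
  norm_num

include hpos hrec hk2 in
lemma S_le {j : ℤ} (h : k ≤ j) : S u j ≤ 4 * w k j := by
  have hle : ∀ i : ℕ, dlt u (j + (i : ℤ)) * (1 / 2) ^ (i + 1)
      ≤ 4 * w k j * (1 / 2) ^ (i + 1) := by
    intro i
    have hji : k ≤ j + (i : ℤ) := by omega
    have h1 := dlt_le hpos hrec hk2 hji
    have h2 := u_le_w hpos hrec hk2 _ hji
    have h3 : w k (j + (i : ℤ)) ≤ w k j * (1 / 2) ^ i := w_add_le h i
    have h4 : (0:ℝ) < (1/2:ℝ) ^ (i+1) := by positivity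
    have h5 : (0:ℝ) < (1/2:ℝ) ^ i := by positivity
    have h6 : (1/2:ℝ) ^ i ≤ 1 := pow_le_one₀ (by norm_num) (by norm_num)
    have h7 := w_pos k j
    have h8 : u (j + (i : ℤ)) ≤ w k j := by nlinarith
    calc dlt u (j + (i : ℤ)) * (1 / 2) ^ (i + 1) ≤ 4 * u (j + (i : ℤ)) * (1 / 2) ^ (i + 1) := by
          nlinarith
    _ ≤ 4 * w k j * (1 / 2) ^ (i + 1) := by nlinarith
  calc S u j ≤ ∑' i : ℕ, 4 * w k j * (1 / 2) ^ (i + 1) :=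
        Summable.tsum_le_tsum hle (sumS hpos hrec hk2 h) ((summable_geometric_two.mul_left (4 * w k j * (1 / 2))).congr
          (fun i => by rw [pow_succ]; ring))
  _ = 4 * w k j * ∑' i : ℕ, (1 / 2 : ℝ) ^ (i + 1) := tsum_mul_left
  _ = 4 * w k j := by rw [tsum_half_pow_succ]; ring

include hpos hrec hk2 in
lemma S_shift {j : ℤ} (h : k ≤ j) : S u j = dlt u j * (1 / 2) + 1 / 2 * S u (j + 1) := by
  rw [S, Summable.tsum_eq_zero_add (sumS hpos hrec hk2 h)]
  have h1 : ∀ i : ℕ, dlt u (j + ((i : ℕ) + 1 : ℕ)) * (1 / 2 : ℝ) ^ ((i + 1) + 1)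
      = 1 / 2 * (dlt u (j + 1 + (i : ℤ)) * (1 / 2) ^ (i + 1)) := by
    intro i
    have h2 : (j + ((i : ℕ) + 1 : ℕ) : ℤ) = j + 1 + (i : ℤ) := by push_cast; ring
    rw [h2, pow_succ]
    ring
  rw [tsum_congr h1, tsum_mul_left]
  norm_num [S]


include hpos hrec hk2 in
lemma log_u : ∀ j, k ≤ j → Real.log (u j) = S u j - Aa u k * (2 : ℝ) ^ (j - k) := by
  refine Int.le_induction ?_ ?_
  · rw [sub_self, zpow_zero, Aa]; ring
  · intro j hj ih
    have h1 := hpos j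
    have h2 := hpos (j + 1)
    have h5 : (0:ℝ) < (1 + u j) * (1 + 4 * u (j + 1)) := by nlinarith
    have hlog : Real.log (u (j + 1)) = 2 * Real.log (u j) - dlt u j := by
      have h6 := congrArg Real.log (hrec j)
      rw [Real.log_mul (ne_of_gt h2) (ne_of_gt h5), Real.log_pow] at h6
      unfold dlt
      push_cast at h6
      linarith
    have hS := S_shift hpos hrec hk2 hj
    have hz : (2 : ℝ) ^ (j + 1 - k) = 2 ^ (j - k) * 2 := by
      rw [show j + 1 - k = (j - k) + 1 by ring, zpow_add_one₀ (two_ne_zero)]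
    rw [hlog, hz, ih]
    linarith

include hpos hrec hk2 in
lemma u_eq {j : ℤ} (h : k ≤ j) :
    u j = Real.exp (S u j - Aa u k * (2 : ℝ) ^ (j - k)) := by
  rw [← log_u hpos hrec hk2 j h, Real.exp_log (hpos j)]

include hpos in
lemma Tterm_nonneg (j : ℤ) (i : ℕ) :
    0 ≤ S u (j + (i : ℤ)) + Real.log (1 + u (j + (i : ℤ))) := by
  have h1 := S_nonneg hpos (j + (i : ℤ))
  have h2 : (0:ℝ) ≤ Real.log (1 + u (j + (i : ℤ))) :=
    Real.log_nonneg (by have := hpos (j + (i : ℤ)); linarith)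
  linarith

include hpos hrec hk2 in
lemma Tterm_le {j : ℤ} (h : k ≤ j) (i : ℕ) :
    S u (j + (i : ℤ)) + Real.log (1 + u (j + (i : ℤ))) ≤ 5 * w k j * (1 / 2) ^ i := by
  have hji : k ≤ j + (i : ℤ) := by omega
  have h1 := S_le hpos hrec hk2 hji
  have h2 := u_le_w hpos hrec hk2 _ hji
  have h3 : w k (j + (i : ℤ)) ≤ w k j * (1 / 2) ^ i := w_add_le h i
  have h4 : Real.log (1 + u (j + (i : ℤ))) ≤ u (j + (i : ℤ)) := by
    have h5 := Real.log_le_sub_one_of_pos (x := 1 + u (j + (i : ℤ)))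
      (by have := hpos (j + (i : ℤ)); linarith)
    linarith
  linarith

include hpos hrec hk2 in
lemma sumT {j : ℤ} (h : k ≤ j) :
    Summable (fun i : ℕ => S u (j + (i : ℤ)) + Real.log (1 + u (j + (i : ℤ)))) := by
  apply Summable.of_nonneg_of_le (Tterm_nonneg hpos j) (Tterm_le hpos hrec hk2 h)
  exact summable_geometric_two.mul_left _

lemma T_nonneg (hpos : ∀ i, 0 < u i) (j : ℤ) : 0 ≤ T u j :=
  tsum_nonneg (Tterm_nonneg hpos j)

include hpos hrec hk2 in
lemma T_le {j : ℤ} (h : k ≤ j) : T u j ≤ 10 * w k j := by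
  calc T u j ≤ ∑' i : ℕ, 5 * w k j * (1 / 2 : ℝ) ^ i :=
        Summable.tsum_le_tsum (Tterm_le hpos hrec hk2 h) (sumT hpos hrec hk2 h)
          (summable_geometric_two.mul_left _)
  _ = 5 * w k j * ∑' i : ℕ, (1 / 2 : ℝ) ^ i := tsum_mul_left
  _ = 10 * w k j := by rw [tsum_geometric_two]; ring

include hpos hrec hk2 in
lemma T_shift {j : ℤ} (h : k ≤ j) :
    T u j = (S u j + Real.log (1 + u j)) + T u (j + 1) := by
  rw [T, Summable.tsum_eq_zero_add (sumT hpos hrec hk2 h)]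
  have h1 : ∀ i : ℕ, (S u (j + ((i : ℕ) + 1 : ℕ)) + Real.log (1 + u (j + ((i : ℕ) + 1 : ℕ))))
      = (S u (j + 1 + (i : ℤ)) + Real.log (1 + u (j + 1 + (i : ℤ)))) := by
    intro i
    have h2 : (j + ((i : ℕ) + 1 : ℕ) : ℤ) = j + 1 + (i : ℤ) := by push_cast; ring
    rw [h2]
  rw [tsum_congr h1]
  norm_num [T]

include hpos hrec hk2 in
lemma log_d {d : ℤ → ℝ} (hdk : 0 < d k)
    (hdrec : ∀ j, k ≤ j → d (j + 1) = 4 * u j * (1 + u j) * d j) :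
    ∀ j, k ≤ j → 0 < d j ∧ Real.log (d j) = Real.log (d k) + (Aa u k + T u k)
      + (2 * ((j : ℝ) - (k : ℝ))) * Real.log 2 - (2 : ℝ) ^ (j - k) * Aa u k - T u j := by
  refine Int.le_induction ?_ ?_
  · refine ⟨hdk, ?_⟩
    rw [show ((2:ℝ) ^ (k - k : ℤ)) = 1 by rw [sub_self, zpow_zero]]
    ring
  · intro j hj ih
    obtain ⟨hdj, ihl⟩ := ih
    have h1 := hpos j
    have hu1 : (0:ℝ) < 1 + u j := by linarith
    have hdj1 : 0 < d (j + 1) := by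
      rw [hdrec j hj]; positivity
    refine ⟨hdj1, ?_⟩
    have hl : Real.log (d (j + 1)) = Real.log 4 + Real.log (u j) + Real.log (1 + u j)
        + Real.log (d j) := by
      rw [hdrec j hj, Real.log_mul (by positivity) (ne_of_gt hdj),
        Real.log_mul (by positivity) (ne_of_gt hu1),
        Real.log_mul (by norm_num) (ne_of_gt h1)]
    have h4 : Real.log (4:ℝ) = 2 * Real.log 2 := by
      rw [show (4:ℝ) = 2 ^ 2 by norm_num, Real.log_pow]
      push_cast; ring
    have hlu := log_u hpos hrec hk2 j hj
    have hT := T_shift hpos hrec hk2 hj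
    have hz : (2 : ℝ) ^ (j + 1 - k) = 2 ^ (j - k) * 2 := by
      rw [show j + 1 - k = (j - k) + 1 by ring, zpow_add_one₀ (two_ne_zero)]
    rw [hl, h4, hlu, ihl, hz]
    push_cast
    linear_combination -1 * hT

end core

lemma abs_exp_sub_one_le (x : ℝ) : |Real.exp x - 1| ≤ |x| * Real.exp |x| := by
  rcases le_or_gt 0 x with hx | hx
  · rw [abs_of_nonneg hx,
      abs_of_nonneg (by linarith [Real.one_le_exp hx] : (0:ℝ) ≤ Real.exp x - 1)]
    have h := Real.add_one_le_exp (-x)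
    have hpos := Real.exp_pos x
    have hm : Real.exp (-x) * Real.exp x = 1 := by rw [← Real.exp_add]; simp
    nlinarith
  · rw [abs_of_neg hx, abs_of_nonpos (by
      linarith [Real.exp_lt_one_iff.mpr hx] : Real.exp x - 1 ≤ 0)]
    have h := Real.add_one_le_exp x
    have h2 : 1 ≤ Real.exp (-x) := Real.one_le_exp (by linarith)
    nlinarith

lemma eq_of_log_eq {x y : ℝ} (hx : 0 < x) (hy : 0 < y) (h : Real.log x = Real.log y) : x = y := by
  have h2 := congrArg Real.exp h
  rwa [Real.exp_log hx, Real.exp_log hy] at h2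

lemma log_mul5 {x1 x2 x3 x4 x5 : ℝ} (h1 : x1 ≠ 0) (h2 : x2 ≠ 0) (h3 : x3 ≠ 0)
    (h4 : x4 ≠ 0) (h5 : x5 ≠ 0) :
    Real.log (x1 * x2 * x3 * x4 * x5)
      = Real.log x1 + Real.log x2 + Real.log x3 + Real.log x4 + Real.log x5 := by
  rw [Real.log_mul (mul_ne_zero (mul_ne_zero (mul_ne_zero h1 h2) h3) h4) h5,
    Real.log_mul (mul_ne_zero (mul_ne_zero h1 h2) h3) h4,
    Real.log_mul (mul_ne_zero h1 h2) h3, Real.log_mul h1 h2]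

lemma log_mul3 {x1 x2 x3 : ℝ} (h1 : x1 ≠ 0) (h2 : x2 ≠ 0) (h3 : x3 ≠ 0) :
    Real.log (x1 * x2 * x3) = Real.log x1 + Real.log x2 + Real.log x3 := by
  rw [Real.log_mul (mul_ne_zero h1 h2) h3, Real.log_mul h1 h2]

lemma w_eq_exp {k j : ℤ} (h : k ≤ j) :
    w k j = Real.exp (-(Real.log 2 * (2:ℝ) ^ (j - k))) := by
  have hN : ((j - k).toNat : ℤ) = j - k := Int.toNat_of_nonneg (by omega)
  have h1 : (2:ℝ) ^ (j - k) = ((2:ℝ) ^ (j - k).toNat : ℝ) := by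
    rw [← zpow_natCast (2:ℝ) (j - k).toNat, hN]
  have h2 : ((2:ℝ) ^ (j - k).toNat : ℝ) = ((2 ^ (j - k).toNat : ℕ) : ℝ) := by push_cast; ring
  rw [w, h1, h2, Real.exp_neg, mul_comm, Real.exp_nat_mul, Real.exp_log two_pos]
  rw [one_div, inv_pow]



section
variable {a b m n : ℤ → ℝ}
variable (hA : ∀ i, 0 < a i) (hB : ∀ i, 0 < b i)
variable (h1 : ∀ i : ℤ, (a i + b i) * (m i + a i) = a i * m (i + 1) + b i * m (i - 1))
variable (h2 : ∀ i : ℤ, (a i + b i) * (n i + b i) = a i * n (i + 1) + b i * n (i - 1))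
variable (h3 : ∀ i : ℤ, (a i + b i) ^ 2 = b i * (m (i + 1) - m (i - 1)))
variable (h4 : ∀ i : ℤ, (a i + b i) ^ 2 = a i * (n (i - 1) - n (i + 1)))

include hA hB h1 h3 in
lemma hEA : ∀ i, a i ^ 2 = b i * (m i - m (i - 1)) := by
  intro i
  have hs : 0 < a i + b i := by linarith [hA i, hB i]
  have key : (a i + b i) * (a i ^ 2 - b i * (m i - m (i - 1))) = 0 := by
    linear_combination a i * h3 i - b i * h1 i
  rcases mul_eq_zero.mp key with h | h
  · exact absurd h (ne_of_gt hs)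
  · linarith

include hA hB h1 h3 in
lemma hEC : ∀ i, m (i + 1) - m i = 2 * a i + b i := by
  intro i
  have key : b i * ((m (i + 1) - m i) - (2 * a i + b i)) = 0 := by
    linear_combination hEA hA hB h1 h3 i - h3 i
  rcases mul_eq_zero.mp key with h | h
  · exact absurd h (ne_of_gt (hB i))
  · linarith

include hA hB h2 h4 in
lemma hEB : ∀ i, n (i - 1) - n i = a i + 2 * b i := by
  intro i
  have hs : 0 < a i + b i := by linarith [hA i, hB i]
  have key : (a i + b i) * ((n (i - 1) - n i) - (a i + 2 * b i)) = 0 := by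
    linear_combination - h4 i - h2 i
  rcases mul_eq_zero.mp key with h | h
  · exact absurd h (ne_of_gt hs)
  · linarith

include hA hB h2 h4 in
lemma hED : ∀ i, a i * (n i - n (i + 1)) = b i ^ 2 := by
  intro i
  linear_combination - h4 i - a i * hEB hA hB h2 h4 i

include hA hB h1 h3 in
lemma hR1 : ∀ i, a (i + 1) ^ 2 = b (i + 1) * (2 * a i + b i) := by
  intro i
  have h5 := hEA hA hB h1 h3 (i + 1)
  rw [show i + 1 - 1 = i by ring] at h5
  rw [h5, hEC hA hB h1 h3 i]

include hA hB h2 h4 in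
lemma hR2 : ∀ i, a i * (a (i + 1) + 2 * b (i + 1)) = b i ^ 2 := by
  intro i
  have h6 := hEB hA hB h2 h4 (i + 1)
  rw [show i + 1 - 1 = i by ring] at h6
  rw [← h6]
  exact hED hA hB h2 h4 i

include hA hB h1 h2 h3 h4 in
lemma hurec : ∀ i, (b (i+1) / (2 * a (i+1))) * ((1 + b i / (2 * a i)) * (1 + 4 * (b (i+1) / (2 * a (i+1))))) = (b i / (2 * a i)) ^ 2 := by
  intro i
  have ha1 := hA i; have ha2 := hA (i + 1); have hb1 := hB i; have hb2 := hB (i + 1)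
  have r1 := hR1 hA hB h1 h3 i
  have r2 := hR2 hA hB h2 h4 i
  field_simp
  linear_combination (2 * b (i + 1) * (2 * a i + b i)) * r2 - (2 * b i ^ 2) * r1

include hA hB h1 h3 in
lemma hdpos : ∀ i, 0 < m i - m (i - 1) := by
  intro i
  have h5 := hEA hA hB h1 h3 i
  nlinarith [hA i, hB i]

include hA hB h1 h2 h3 h4 in
lemma hphi (k : ℤ) : (n (k - 1) - n k) / (m k - m (k - 1))
    = 2 * (b k / (2 * a k)) * (1 + 4 * (b k / (2 * a k))) := by
  rw [hEB hA hB h2 h4 k, div_eq_iff (ne_of_gt (hdpos hA hB h1 h3 k))]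
  have ha1 := hA k; have hb1 := hB k
  field_simp
  linear_combination (2 * (a k + 2 * b k)) * hEA hA hB h1 h3 k
  

include hA hB h1 h3 in
lemma haj (j : ℤ) : a j = 2 * (b j / (2 * a j)) * (m j - m (j - 1)) := by
  have ha1 := hA j; have hb1 := hB j
  field_simp
  exact hEA hA hB h1 h3 j

include hA in
lemma hbj (j : ℤ) : b j = 2 * (b j / (2 * a j)) * a j := by
  have ha1 := hA j
  field_simp

include hA hB h2 h4 in
lemma hej (j : ℤ) : n (j - 1) - n j = (1 + 4 * (b j / (2 * a j))) * a j := by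
  rw [hEB hA hB h2 h4 j]
  have ha1 := hA j
  field_simp
  ring

include hA hB h1 h3 in
lemma hdrecstep (j : ℤ) : m (j + 1) - m (j + 1 - 1)
    = 4 * (b j / (2 * a j)) * (1 + b j / (2 * a j)) * (m j - m (j - 1)) := by
  rw [show j + 1 - 1 = j by ring, hEC hA hB h1 h3 j]
  have ha1 := hA j; have hb1 := hB j
  field_simp
  linear_combination 4 * hEA hA hB h1 h3 j

end

end ABMNdecay




/-- The ABMN system on ℤ. -/
def IsABMN (a b m n : ℤ → ℝ) : Prop :=
  (∀ i, 0 ≤ a i) ∧ (∀ i, 0 ≤ b i) ∧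
  (∀ i : ℤ, (a i + b i) * (m i + a i) = a i * m (i + 1) + b i * m (i - 1)) ∧
  (∀ i : ℤ, (a i + b i) * (n i + b i) = a i * n (i + 1) + b i * n (i - 1)) ∧
  (∀ i : ℤ, (a i + b i) ^ 2 = b i * (m (i + 1) - m (i - 1))) ∧
  (∀ i : ℤ, (a i + b i) ^ 2 = a i * (n (i - 1) - n (i + 1)))

set_option maxHeartbeats 2000000 in
/-- Asymptotic decay of a positive ABMN solution to the right of its battlefield
index `k` (the unique index with `φ_k ∈ (1/3,3]` where
`φᵢ = (nᵢ₋₁ − nᵢ)/(mᵢ − mᵢ₋₁)`), with universal constants. -/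
theorem abmn_decay_right_of_battlefield :
    ∃ A₁ A₂ F₁ F₂ C c : ℝ,
      0 < A₁ ∧ A₁ ≤ A₂ ∧ 0 < F₁ ∧ F₁ ≤ F₂ ∧ 0 ≤ C ∧ 0 < c ∧
      ∀ a b m n : ℤ → ℝ, IsABMN a b m n →
        (∀ i, 0 < a i) → (∀ i, 0 < b i) →
        ∀ k : ℤ,
          (n (k - 1) - n k) / (m k - m (k - 1)) ∈ Set.Ioc (1 / 3 : ℝ) 3 →
          ∃ A F : ℝ, A ∈ Set.Icc A₁ A₂ ∧ F ∈ Set.Icc F₁ F₂ ∧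
            ∀ j : ℤ, k ≤ j →
              ∃ e₁ e₂ e₃ e₄ : ℝ,
                |e₁| ≤ C * Real.exp (-(c * 2 ^ (j - k))) ∧
                |e₂| ≤ C * Real.exp (-(c * 2 ^ (j - k))) ∧
                |e₃| ≤ C * Real.exp (-(c * 2 ^ (j - k))) ∧
                |e₄| ≤ C * Real.exp (-(c * 2 ^ (j - k))) ∧
                a j = (m k - m (k - 1)) * (2 * F) * 2 ^ (2 * (j - k)) *
                  Real.exp (-(2 * 2 ^ (j - k) * A)) * (1 + e₁) ∧
                b j = (m k - m (k - 1)) * (4 * F) * 2 ^ (2 * (j - k)) *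
                  Real.exp (-(3 * 2 ^ (j - k) * A)) * (1 + e₂) ∧
                m j - m (j - 1) = (m k - m (k - 1)) * F * 2 ^ (2 * (j - k)) *
                  Real.exp (-(2 ^ (j - k) * A)) * (1 + e₃) ∧
                n (j - 1) - n j = (m k - m (k - 1)) * (2 * F) * 2 ^ (2 * (j - k)) *
                  Real.exp (-(2 ^ (j - k + 1) * A)) * (1 + e₄) := by
  refine ⟨Real.log 2, 12, 1, Real.exp 17, 18 * Real.exp 18, Real.log 2,
    Real.log_pos (by norm_num), ?_, one_pos, Real.one_le_exp (by norm_num), by positivity,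
    Real.log_pos (by norm_num), ?_⟩
  · linarith [Real.log_le_sub_one_of_pos (by norm_num : (0:ℝ) < 2)]
  intro a b m n habmn hA hB k hφ
  obtain ⟨-, -, h1, h2, h3, h4⟩ := habmn
  set u : ℤ → ℝ := fun i => b i / (2 * a i) with hu_def
  have hupos : ∀ i, 0 < u i := fun i => div_pos (hB i) (by linarith [hA i])
  have hrec : ∀ i, u (i + 1) * ((1 + u i) * (1 + 4 * u (i + 1))) = u i ^ 2 := by
    simp only [hu_def]; exact ABMNdecay.hurec hA hB h1 h2 h3 h4
  have hdpos : ∀ i, 0 < m i - m (i - 1) := ABMNdecay.hdpos hA hB h1 h3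
  have hphiu : (n (k - 1) - n k) / (m k - m (k - 1)) = 2 * u k * (1 + 4 * u k) := by
    simp only [hu_def]; exact ABMNdecay.hphi hA hB h1 h2 h3 h4 k
  have hφ1 : 1 / 3 < 2 * u k * (1 + 4 * u k) := by rw [← hphiu]; exact hφ.1
  have hφ2 : 2 * u k * (1 + 4 * u k) ≤ 3 := by rw [← hphiu]; exact hφ.2
  have hk2 : u k ≤ 1 / 2 := by nlinarith [hupos k]
  have hk9 : 1 / 9 < u k := by nlinarith [hupos k]
  have hdrec : ∀ j, k ≤ j →
      m (j + 1) - m (j + 1 - 1) = 4 * u j * (1 + u j) * (m j - m (j - 1)) := by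
    intro j _
    simp only [hu_def]; exact ABMNdecay.hdrecstep hA hB h1 h3 j
  have hld := ABMNdecay.log_d hupos hrec hk2 (d := fun i => m i - m (i - 1)) (hdpos k) hdrec
  have hSk0 := ABMNdecay.S_nonneg hupos k
  have hSkle := ABMNdecay.S_le hupos hrec hk2 (le_refl k)
  rw [ABMNdecay.w_self] at hSkle
  have hTk0 := ABMNdecay.T_nonneg hupos k
  have hTkle := ABMNdecay.T_le hupos hrec hk2 (le_refl k)
  rw [ABMNdecay.w_self] at hTkle
  have hlog2pos : (0:ℝ) < Real.log 2 := Real.log_pos (by norm_num)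
  have hlogk1 : Real.log (u k) ≤ -Real.log 2 := by
    have h5 := Real.log_le_log (hupos k) hk2
    rwa [show (1/2:ℝ) = 2⁻¹ by norm_num, Real.log_inv] at h5
  have hlogk2 : -Real.log (u k) ≤ 8 := by
    have h9 : Real.log ((9:ℝ)⁻¹) ≤ Real.log (u k) :=
      Real.log_le_log (by norm_num) (by linarith)
    rw [Real.log_inv] at h9
    have h10 := Real.log_le_sub_one_of_pos (by norm_num : (0:ℝ) < 9)
    linarith
  have hA12 : ABMNdecay.Aa u k ∈ Set.Icc (Real.log 2) 12 := by
    unfold ABMNdecay.Aa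
    constructor
    · linarith
    · linarith
  refine ⟨ABMNdecay.Aa u k, Real.exp (ABMNdecay.Aa u k + ABMNdecay.T u k), hA12, ?_, ?_⟩
  · constructor
    · exact Real.one_le_exp (by have := hA12.1; linarith)
    · exact Real.exp_le_exp.mpr (by have := hA12.2; linarith)
  intro j hj
  have hw0 := ABMNdecay.w_pos k j
  have hw1 := ABMNdecay.w_le_half k j
  have hS0 := ABMNdecay.S_nonneg hupos j
  have hS4 := ABMNdecay.S_le hupos hrec hk2 hj
  have hT0 := ABMNdecay.T_nonneg hupos j
  have hT10 := ABMNdecay.T_le hupos hrec hk2 hj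
  have hu0 := hupos j
  have huw := ABMNdecay.u_le_w hupos hrec hk2 j hj
  have hlog4u0 : 0 ≤ Real.log (1 + 4 * u j) := Real.log_nonneg (by linarith)
  have hlog4u : Real.log (1 + 4 * u j) ≤ 4 * ABMNdecay.w k j := by
    have h5 := Real.log_le_sub_one_of_pos (show (0:ℝ) < 1 + 4 * u j by linarith)
    linarith
  have hwexp := ABMNdecay.w_eq_exp (k := k) (j := j) hj
  have key : ∀ x : ℝ, |x| ≤ 18 * ABMNdecay.w k j →
      |Real.exp x - 1| ≤ 18 * Real.exp 18 * Real.exp (-(Real.log 2 * 2 ^ (j - k))) := by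
    intro x hx
    have h5 := ABMNdecay.abs_exp_sub_one_le x
    have h6 : |x| ≤ 18 := by nlinarith
    have h7 : Real.exp |x| ≤ Real.exp 18 := Real.exp_le_exp.mpr h6
    have h8 : |x| * Real.exp |x| ≤ (18 * ABMNdecay.w k j) * Real.exp 18 :=
      mul_le_mul hx h7 (Real.exp_nonneg _) (by positivity)
    rw [← hwexp]
    calc |Real.exp x - 1| ≤ |x| * Real.exp |x| := h5
    _ ≤ 18 * ABMNdecay.w k j * Real.exp 18 := h8
    _ = 18 * Real.exp 18 * ABMNdecay.w k j := by ring
  have hdj : (0:ℝ) < m j - m (j - 1) := hdpos j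
  have hldj : Real.log (m j - m (j - 1)) = Real.log (m k - m (k - 1))
      + (ABMNdecay.Aa u k + ABMNdecay.T u k) + (2 * ((j:ℝ) - (k:ℝ))) * Real.log 2
      - (2:ℝ) ^ (j - k) * ABMNdecay.Aa u k - ABMNdecay.T u j := (hld j hj).2
  have hlu : Real.log (u j) = ABMNdecay.S u j - ABMNdecay.Aa u k * 2 ^ (j - k) :=
    ABMNdecay.log_u hupos hrec hk2 j hj
  have hQpos : (0:ℝ) < (2:ℝ) ^ (2 * (j - k)) := zpow_pos two_pos _
  have hlogQ : Real.log ((2:ℝ) ^ (2 * (j - k))) = ((2 * (j - k) : ℤ) : ℝ) * Real.log 2 :=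
    Real.log_zpow 2 (2 * (j - k))
  have hdkpos : (0:ℝ) < m k - m (k - 1) := hdpos k
  have hajj : a j = 2 * u j * (m j - m (j - 1)) := by
    simp only [hu_def]; exact ABMNdecay.haj hA hB h1 h3 j
  have hbjj : b j = 2 * u j * a j := by simp only [hu_def]; exact ABMNdecay.hbj hA j
  have hejj : n (j - 1) - n j = (1 + 4 * u j) * a j := by
    simp only [hu_def]; exact ABMNdecay.hej hA hB h2 h4 j
  have hlaj : Real.log (a j) = Real.log 2 + Real.log (u j) + Real.log (m j - m (j - 1)) := by
    rw [hajj, ABMNdecay.log_mul3 two_ne_zero (ne_of_gt (hupos j)) (ne_of_gt hdj)]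
  have hl4 : Real.log (4:ℝ) = 2 * Real.log 2 := by
    rw [show (4:ℝ) = 2 ^ 2 by norm_num, Real.log_pow]
    push_cast; ring
  have hz1 : (2:ℝ) ^ (j - k + 1) = 2 ^ (j - k) * 2 := zpow_add_one₀ two_ne_zero _
  refine ⟨Real.exp (ABMNdecay.S u j - ABMNdecay.T u j) - 1,
    Real.exp (2 * ABMNdecay.S u j - ABMNdecay.T u j) - 1,
    Real.exp (-(ABMNdecay.T u j)) - 1,
    Real.exp (ABMNdecay.S u j - ABMNdecay.T u j + Real.log (1 + 4 * u j)) - 1,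
    key _ (by rw [abs_le]; constructor <;> nlinarith),
    key _ (by rw [abs_le]; constructor <;> nlinarith),
    key _ (by rw [abs_le]; constructor <;> nlinarith),
    key _ (by rw [abs_le]; constructor <;> nlinarith), ?_, ?_, ?_, ?_⟩
  · -- a j
    rw [show (1:ℝ) + (Real.exp (ABMNdecay.S u j - ABMNdecay.T u j) - 1)
        = Real.exp (ABMNdecay.S u j - ABMNdecay.T u j) by ring]
    apply ABMNdecay.eq_of_log_eq (hA j)
      (mul_pos (mul_pos (mul_pos (mul_pos hdkpos (by positivity)) hQpos)
        (Real.exp_pos _)) (Real.exp_pos _))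
    rw [ABMNdecay.log_mul5 (ne_of_gt hdkpos) (by positivity) (ne_of_gt hQpos)
        (Real.exp_ne_zero _) (Real.exp_ne_zero _), hlaj, hlu, hldj, hlogQ,
      Real.log_mul two_ne_zero (Real.exp_ne_zero _), Real.log_exp, Real.log_exp, Real.log_exp]
    push_cast
    ring
  · -- b j
    rw [show (1:ℝ) + (Real.exp (2 * ABMNdecay.S u j - ABMNdecay.T u j) - 1)
        = Real.exp (2 * ABMNdecay.S u j - ABMNdecay.T u j) by ring]
    apply ABMNdecay.eq_of_log_eq (hB j)
      (mul_pos (mul_pos (mul_pos (mul_pos hdkpos (by positivity)) hQpos)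
        (Real.exp_pos _)) (Real.exp_pos _))
    rw [hbjj, ABMNdecay.log_mul3 two_ne_zero (ne_of_gt (hupos j)) (ne_of_gt (hA j)),
      ABMNdecay.log_mul5 (ne_of_gt hdkpos) (by positivity) (ne_of_gt hQpos)
        (Real.exp_ne_zero _) (Real.exp_ne_zero _), hlaj, hlu, hldj, hlogQ,
      Real.log_mul (by norm_num : (4:ℝ) ≠ 0) (Real.exp_ne_zero _), hl4,
      Real.log_exp, Real.log_exp, Real.log_exp]
    push_cast
    ring
  · -- m j - m (j - 1)
    rw [show (1:ℝ) + (Real.exp (-(ABMNdecay.T u j)) - 1)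
        = Real.exp (-(ABMNdecay.T u j)) by ring]
    apply ABMNdecay.eq_of_log_eq hdj
      (mul_pos (mul_pos (mul_pos (mul_pos hdkpos (Real.exp_pos _)) hQpos)
        (Real.exp_pos _)) (Real.exp_pos _))
    rw [ABMNdecay.log_mul5 (ne_of_gt hdkpos) (Real.exp_ne_zero _) (ne_of_gt hQpos)
        (Real.exp_ne_zero _) (Real.exp_ne_zero _), hldj, hlogQ,
      Real.log_exp, Real.log_exp, Real.log_exp]
    push_cast
    ring
  · -- n (j - 1) - n j
    rw [show (1:ℝ) + (Real.exp (ABMNdecay.S u j - ABMNdecay.T u j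
        + Real.log (1 + 4 * u j)) - 1)
        = Real.exp (ABMNdecay.S u j - ABMNdecay.T u j + Real.log (1 + 4 * u j)) by ring,
      hz1]
    apply ABMNdecay.eq_of_log_eq (by rw [hejj]; exact mul_pos (by linarith [hupos j]) (hA j))
      (mul_pos (mul_pos (mul_pos (mul_pos hdkpos (by positivity)) hQpos)
        (Real.exp_pos _)) (Real.exp_pos _))
    rw [hejj, Real.log_mul (by linarith [hupos j] : (0:ℝ) < 1 + 4 * u j).ne' (ne_of_gt (hA j)),
      ABMNdecay.log_mul5 (ne_of_gt hdkpos) (by positivity) (ne_of_gt hQpos)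
        (Real.exp_ne_zero _) (Real.exp_ne_zero _), hlaj, hlu, hldj, hlogQ,
      Real.log_mul two_ne_zero (Real.exp_ne_zero _), Real.log_exp, Real.log_exp, Real.log_exp]
    push_cast
    ring
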